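/- Let X be a finite set and π a strict ranking (bijection X → {1,…,|X|}). Let p: X → ℝ^K. There exists β ∈ ℝ^K with β·p(x) > β·p(y) whenever π(x) > π(y) if and only if the following holds: whenever λ_1,…,λ_{|X|-1} ≥ 0 satisfy λ_1 p(π^{-1}(|X|)) + Σ_{i=2}^{|X|-1} (λ_i − λ_{i−1}) p(π^{-1}(|X|+1−i)) − λ_{|X|-1} p(π^{-1}(1)) = 0, then all λ_i = 0. -/

import Mathlib

open Finset

/-- Gordan-type theorem of the alternative for a family indexed by `Fin n`. -/
theorem gordan_aux {K n : ℕ} (hn0 : 0 < n) (P : Fin n → Fin K → ℝ) :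
    (∃ β : Fin K → ℝ, ∀ a b : Fin n, b < a →
        (∑ i, β i * P b i) < (∑ i, β i * P a i)) ↔
    (∀ lam : ℕ → ℝ, (∀ i ∈ Finset.Icc 1 (n - 1), 0 ≤ lam i) →
      lam 1 • P ⟨n - 1, Nat.sub_lt hn0 one_pos⟩
        + (∑ i ∈ Finset.Icc 2 (n - 1),
            (lam i - lam (i - 1)) • P ⟨(n - i) % n, Nat.mod_lt _ hn0⟩)
        - lam (n - 1) • P ⟨0, hn0⟩ = 0 →
      ∀ i ∈ Finset.Icc 1 (n - 1), lam i = 0) := by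
  classical
  set q : ℕ → Fin K → ℝ := fun i => P ⟨(n - i) % n, Nat.mod_lt _ hn0⟩ with hqdef
  set v : ℕ → Fin K → ℝ := fun i => q i - q (i + 1) with hvdef
  have e3 : ∀ i, P ⟨(n - i) % n, Nat.mod_lt _ hn0⟩ = q i := fun _ => rfl
  -- Abel summation: the big expression equals `∑ i, lam i • v i`
  have key : ∀ lam : ℕ → ℝ, 2 ≤ n →
      lam 1 • P ⟨n - 1, Nat.sub_lt hn0 one_pos⟩
        + (∑ i ∈ Finset.Icc 2 (n - 1),
            (lam i - lam (i - 1)) • P ⟨(n - i) % n, Nat.mod_lt _ hn0⟩)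
        - lam (n - 1) • P ⟨0, hn0⟩
        = ∑ i ∈ Finset.Icc 1 (n - 1), lam i • v i := by
    intro lam hn2
    have e1 : P ⟨n - 1, Nat.sub_lt hn0 one_pos⟩ = q 1 := by
      simp only [hqdef]
      exact congrArg P (Fin.ext (show n - 1 = (n - 1) % n by
        rw [Nat.mod_eq_of_lt (Nat.sub_lt hn0 one_pos)]))
    have e2 : P ⟨0, hn0⟩ = q n := by
      simp only [hqdef]
      exact congrArg P (Fin.ext (show 0 = (n - n) % n by simp))
    rw [e1, e2]
    simp only [e3]
    have e4 : ∑ i ∈ Finset.Icc 2 (n - 1), lam (i - 1) • q i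
        = ∑ i ∈ Finset.Icc 1 (n - 2), lam i • q (i + 1) := by
      have hmap : Finset.Icc 2 (n - 1) = (Finset.Icc 1 (n - 2)).map (addRightEmbedding 1) := by
        rw [Finset.map_add_right_Icc]
        congr 1
        · omega
      rw [hmap, Finset.sum_map]
      refine Finset.sum_congr rfl fun i hi => ?_
      simp [addRightEmbedding]
    have s1 : ∑ i ∈ Finset.Icc 1 (n - 1), lam i • q i
        = lam 1 • q 1 + ∑ i ∈ Finset.Icc 2 (n - 1), lam i • q i := by
      have hins : Finset.Icc 1 (n - 1) = insert 1 (Finset.Icc 2 (n - 1)) := by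
        ext x; simp only [Finset.mem_Icc, Finset.mem_insert]; omega
      rw [hins, Finset.sum_insert (by simp)]
    have s2 : ∑ i ∈ Finset.Icc 1 (n - 1), lam i • q (i + 1)
        = (∑ i ∈ Finset.Icc 1 (n - 2), lam i • q (i + 1)) + lam (n - 1) • q n := by
      have hins : Finset.Icc 1 (n - 1) = insert (n - 1) (Finset.Icc 1 (n - 2)) := by
        ext x; simp only [Finset.mem_Icc, Finset.mem_insert]; omega
      rw [hins, Finset.sum_insert (by simp only [Finset.mem_Icc]; omega)]
      have hnn : n - 1 + 1 = n := by omega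
      rw [hnn, add_comm]
    calc lam 1 • q 1 + (∑ i ∈ Finset.Icc 2 (n - 1), (lam i - lam (i - 1)) • q i)
          - lam (n - 1) • q n
        = lam 1 • q 1 + ((∑ i ∈ Finset.Icc 2 (n - 1), lam i • q i)
            - ∑ i ∈ Finset.Icc 2 (n - 1), lam (i - 1) • q i) - lam (n - 1) • q n := by
          simp only [sub_smul, Finset.sum_sub_distrib]
      _ = (∑ i ∈ Finset.Icc 1 (n - 1), lam i • q i)
            - ∑ i ∈ Finset.Icc 1 (n - 1), lam i • q (i + 1) := by
          rw [s1, s2, e4]; abel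
      _ = ∑ i ∈ Finset.Icc 1 (n - 1), lam i • v i := by
          simp only [hvdef, smul_sub, Finset.sum_sub_distrib]
  constructor
  · -- representable ⇒ condition (*)
    rintro ⟨β, hβ⟩ lam hnn heq i hi
    have hn2 : 2 ≤ n := by
      rcases Finset.mem_Icc.1 hi with ⟨h1, h2⟩; omega
    have heq' : ∑ j ∈ Finset.Icc 1 (n - 1), lam j • v j = 0 := (key lam hn2).symm.trans heq
    have hpos : ∀ j ∈ Finset.Icc 1 (n - 1), 0 < ∑ k, β k * v j k := by
      intro j hj
      rcases Finset.mem_Icc.1 hj with ⟨hj1, hj2⟩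
      have hlt : (⟨(n - (j + 1)) % n, Nat.mod_lt _ hn0⟩ : Fin n)
          < ⟨(n - j) % n, Nat.mod_lt _ hn0⟩ := by
        rw [Fin.mk_lt_mk, Nat.mod_eq_of_lt (by omega), Nat.mod_eq_of_lt (by omega)]
        omega
      have hlt' := hβ _ _ hlt
      have hv : ∑ k, β k * v j k = (∑ k, β k * q j k) - ∑ k, β k * q (j + 1) k := by
        simp only [hvdef, Pi.sub_apply, mul_sub, Finset.sum_sub_distrib]
      rw [hv]
      have h1 : (∑ k, β k * q (j + 1) k) < ∑ k, β k * q j k := hlt'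
      linarith
    have hsum : ∑ j ∈ Finset.Icc 1 (n - 1), lam j * (∑ k, β k * v j k) = 0 := by
      have hcongr := congrArg (fun w : Fin K → ℝ => ∑ k, β k * w k) heq'
      simp only [Finset.sum_apply, Pi.smul_apply, smul_eq_mul, Pi.zero_apply, mul_zero,
        Finset.sum_const_zero, Finset.mul_sum] at hcongr
      rw [← hcongr, Finset.sum_comm]
      refine Finset.sum_congr rfl fun j _ => ?_
      rw [Finset.mul_sum]
      refine Finset.sum_congr rfl fun k _ => ?_
      ring
    have hz := (Finset.sum_eq_zero_iff_of_nonneg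
      (fun j hj => mul_nonneg (hnn j hj) (le_of_lt (hpos j hj)))).1 hsum i hi
    rcases mul_eq_zero.1 hz with h | h
    · exact h
    · exact absurd h (hpos i hi).ne'
  · -- condition (*) ⇒ representable
    intro hstar
    by_cases hn2 : 2 ≤ n
    swap
    · refine ⟨0, fun a b hab => absurd hab ?_⟩
      have h1 : a.val < n := a.isLt
      have h2 : b.val < n := b.isLt
      intro h
      have h3 : b.val < a.val := h
      omega
    set S : Finset (Fin K → ℝ) := (Finset.Icc 1 (n - 1)).image v with hS
    have h0 : (0 : Fin K → ℝ) ∉ convexHull ℝ (S : Set (Fin K → ℝ)) := by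
      intro hmem
      rw [Finset.mem_convexHull'] at hmem
      obtain ⟨μ, hμ0, hμ1, hμsum⟩ := hmem
      set t : Finset ℕ := (Finset.Icc 1 (n - 1)).filter
        (fun i => Function.invFunOn v ↑(Finset.Icc 1 (n - 1)) (v i) = i) with ht
      set lam : ℕ → ℝ := fun i => if i ∈ t then μ (v i) else 0 with hlam
      have hrep : ∀ w ∈ S, Function.invFunOn v ↑(Finset.Icc 1 (n - 1)) w ∈ t ∧
          v (Function.invFunOn v ↑(Finset.Icc 1 (n - 1)) w) = w := by
        intro w hw
        rw [hS, Finset.mem_image] at hw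
        obtain ⟨a, ha, hva⟩ := hw
        have hex : ∃ x ∈ (↑(Finset.Icc 1 (n - 1)) : Set ℕ), v x = w :=
          ⟨a, by simpa using ha, hva⟩
        have h1 := Function.invFunOn_mem hex
        have h2 := Function.invFunOn_eq hex
        refine ⟨Finset.mem_filter.2 ⟨by simpa using h1, ?_⟩, h2⟩
        rw [h2]
      have hinj : ∀ a ∈ t, ∀ b ∈ t, v a = v b → a = b := by
        intro a ha b hb hab
        have ha' := (Finset.mem_filter.1 ha).2
        have hb' := (Finset.mem_filter.1 hb).2
        rw [← ha', ← hb', hab]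
      have himg : t.image v = S := by
        apply Finset.Subset.antisymm
        · rw [hS]; exact Finset.image_subset_image (Finset.filter_subset _ _)
        · intro w hw
          obtain ⟨h1, h2⟩ := hrep w hw
          exact Finset.mem_image.2 ⟨_, h1, h2⟩
      have hsum : ∑ i ∈ Finset.Icc 1 (n - 1), lam i • v i = 0 := by
        have step1 : ∑ i ∈ Finset.Icc 1 (n - 1), lam i • v i
            = ∑ i ∈ t, μ (v i) • v i := by
          rw [hlam]
          simp only [ite_smul, zero_smul]
          rw [Finset.sum_ite_mem]
          congr 1
          exact Finset.inter_eq_right.2 (Finset.filter_subset _ _)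
        rw [step1, ← hμsum, ← himg, Finset.sum_image hinj]
      have hall := hstar lam
        (fun i hiIcc => by
          rw [hlam]
          dsimp only
          split
          · next hit =>
              refine hμ0 _ ?_
              rw [hS]
              exact Finset.mem_image_of_mem v ((Finset.mem_filter.1 hit).1)
          · exact le_refl 0)
        ((key lam hn2).trans hsum)
      have hμz : ∀ w ∈ S, μ w = 0 := by
        intro w hw
        obtain ⟨h1, h2⟩ := hrep w hw
        have hz := hall _ (Finset.mem_filter.1 h1).1
        rw [hlam] at hz
        simp only [h1, if_true] at hz
        rwa [h2] at hz
      rw [Finset.sum_eq_zero hμz] at hμ1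
      norm_num at hμ1
    have hcl : IsClosed (convexHull ℝ (S : Set (Fin K → ℝ))) :=
      (S.finite_toSet.isCompact_convexHull (𝕜 := ℝ)).isClosed
    obtain ⟨f, u, hfu, hub⟩ :=
      geometric_hahn_banach_point_closed (convex_convexHull ℝ _) hcl h0
    have hu : 0 < u := by simpa using hfu
    set β : Fin K → ℝ := fun j => f (fun j' => if j = j' then 1 else 0) with hβ
    have hf : ∀ w : Fin K → ℝ, f w = ∑ j, β j * w j := by
      intro w
      conv_lhs => rw [pi_eq_sum_univ w]
      rw [map_sum]
      refine Finset.sum_congr rfl fun j _ => ?_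
      rw [map_smul]
      simp [hβ, mul_comm]
    refine ⟨β, ?_⟩
    have hstep : ∀ m, ∀ hm1 : m + 1 < n,
        (∑ k, β k * P ⟨m, Nat.lt_of_succ_lt hm1⟩ k)
          < ∑ k, β k * P ⟨m + 1, hm1⟩ k := by
      intro m hm1
      have hiIcc : n - (m + 1) ∈ Finset.Icc 1 (n - 1) := by
        rw [Finset.mem_Icc]; omega
      have hvS : v (n - (m + 1)) ∈ S := by
        rw [hS]; exact Finset.mem_image_of_mem v hiIcc
      have hpos : 0 < f (v (n - (m + 1))) :=
        lt_trans hu (hub _ (subset_convexHull ℝ _ hvS))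
      rw [hf] at hpos
      have hq1 : q (n - (m + 1)) = P ⟨m + 1, hm1⟩ := by
        simp only [hqdef]
        exact congrArg P (Fin.ext (show (n - (n - (m + 1))) % n = m + 1 by
          rw [Nat.mod_eq_of_lt (by omega)]; omega))
      have hq2 : q (n - (m + 1) + 1) = P ⟨m, Nat.lt_of_succ_lt hm1⟩ := by
        simp only [hqdef]
        exact congrArg P (Fin.ext (show (n - (n - (m + 1) + 1)) % n = m by
          rw [Nat.mod_eq_of_lt (by omega)]; omega))
      have hv : ∑ k, β k * v (n - (m + 1)) k
          = (∑ k, β k * P ⟨m + 1, hm1⟩ k)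
            - ∑ k, β k * P ⟨m, Nat.lt_of_succ_lt hm1⟩ k := by
        simp only [hvdef, Pi.sub_apply, mul_sub, Finset.sum_sub_distrib, hq1, hq2]
      rw [hv] at hpos
      linarith
    have hmono : ∀ b : ℕ, ∀ hb : b < n, ∀ a : ℕ, ∀ ha : a < b,
        (∑ k, β k * P ⟨a, lt_trans ha hb⟩ k) < ∑ k, β k * P ⟨b, hb⟩ k := by
      intro b
      induction b with
      | zero => intro _ a ha; exact absurd ha (Nat.not_lt_zero a)
      | succ b ih =>
        intro hb a ha
        rcases Nat.lt_succ_iff_lt_or_eq.1 ha with h | h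
        · exact lt_trans (ih (by omega) a h) (hstep b hb)
        · subst h; exact hstep a hb
    intro a b hab
    have hab' : b.val < a.val := hab
    have hres := hmono a.val a.isLt b.val hab'
    have hea : (⟨a.val, a.isLt⟩ : Fin n) = a := Fin.ext rfl
    have heb : (⟨b.val, lt_trans hab' a.isLt⟩ : Fin n) = b := Fin.ext rfl
    rwa [hea, heb] at hres

/-- A ranking `π` is linearly representable over the features `p` iff the only nonnegative
solution `λ` of the stated linear system is the trivial one (Condition (*)). -/
theorem representable_iff_condition_star {X : Type*} [Fintype X] [Nonempty X] {K : ℕ}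
    (π : X ≃ Fin (Fintype.card X)) (p : X → Fin K → ℝ) :
    (∃ β : Fin K → ℝ, ∀ x y : X, π y < π x →
        (∑ i, β i * p y i) < (∑ i, β i * p x i)) ↔
    (∀ lam : ℕ → ℝ, (∀ i ∈ Finset.Icc 1 (Fintype.card X - 1), 0 ≤ lam i) →
      lam 1 • p (π.symm ⟨Fintype.card X - 1, Nat.sub_lt Fintype.card_pos one_pos⟩)
        + (∑ i ∈ Finset.Icc 2 (Fintype.card X - 1),
            (lam i - lam (i - 1)) •
              p (π.symm ⟨(Fintype.card X - i) % Fintype.card X,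
                  Nat.mod_lt _ Fintype.card_pos⟩))
        - lam (Fintype.card X - 1) • p (π.symm ⟨0, Fintype.card_pos⟩) = 0 →
      ∀ i ∈ Finset.Icc 1 (Fintype.card X - 1), lam i = 0) := by
  have h := gordan_aux (K := K) (n := Fintype.card X) Fintype.card_pos
    (fun k => p (π.symm k))
  constructor
  · rintro ⟨β, hβ⟩
    exact h.mp ⟨β, fun a b hba => by
      simpa using hβ (π.symm a) (π.symm b) (by simpa using hba)⟩
  · intro hstar
    obtain ⟨β, hβ⟩ := h.mpr hstar
    refine ⟨β, fun x y hxy => ?_⟩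
    have := hβ (π x) (π y) hxy
    simpa using this
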